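/- Let (𝐗, 𝐘) be a mixture of m i.i.d. sources: P_{X^n Y^n} = ∑_{i=1}^m α_i ∏_{t=1}^n P_{X_i Y_i}, with α_i > 0, ∑ α_i = 1, and H(X_1|Y_1) > H(X_2|Y_2) > ⋯ > H(X_m|Y_m), where H(X_i|Y_i) is the conditional Shannon entropy of component i. Set A_i = ∑_{j<i} α_j and A_{m+1} = 1. Fix α ∈ (0,1), an index i, and ε ∈ [A_i, A_{i+1}). Then H_α^ε(𝐗|𝐘) := lim_{δ↓0} limsup_{n→∞} (1/n) H_α^{ε+δ}(X^n|Y^n) = H(X_i|Y_i). -/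

import Mathlib

open Filter

/-- Conditional ε-smooth Rényi entropy for finite alphabets. -/
noncomputable def condSmoothRenyiF {X Y : Type} [Fintype X] [Fintype Y]
    (P : X → Y → ℝ) (α ε : ℝ) : ℝ :=
  sInf { h : ℝ | ∃ Q : X → Y → ℝ, (∀ x y, 0 ≤ Q x y ∧ Q x y ≤ P x y) ∧
    (1 - ε ≤ ∑ x, ∑ y, Q x y) ∧
    h = (α / (1 - α)) * Real.log (∑ y, (∑ x, Q x y ^ α) ^ (1 / α)) }

/-- Conditional Shannon entropy `H(X|Y)` (natural log; `0 log 0 = 0`). -/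
noncomputable def condShannon {X Y : Type} [Fintype X] [Fintype Y]
    (P : X → Y → ℝ) : ℝ :=
  ∑ y, ∑ x, P x y * Real.log ((∑ x', P x' y) / P x y)

open Finset
set_option linter.unusedSectionVars false
set_option linter.unusedVariables false

section Lemmas
variable {X Y : Type} [Fintype X] [Fintype Y]

lemma sum_tuple_pair {n : ℕ} (G : (Fin n → X × Y) → ℝ) :
    ∑ v : Fin n → X × Y, G v
      = ∑ x : Fin n → X, ∑ y : Fin n → Y, G (fun t => (x t, y t)) := by
  have h2 : (∑ p : (Fin n → X) × (Fin n → Y), G (fun t => (p.1 t, p.2 t)))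
      = ∑ x : Fin n → X, ∑ y : Fin n → Y, G (fun t => (x t, y t)) :=
    Fintype.sum_prod_type (fun p : (Fin n → X) × (Fin n → Y) => G (fun t => (p.1 t, p.2 t)))
  rw [← h2]
  exact Fintype.sum_equiv (Equiv.arrowProdEquivProdArrow (Fin n) (fun _ => X) (fun _ => Y)) _ _
    (fun v => by simp [Equiv.arrowProdEquivProdArrow])

lemma sum_prod_factorize {n : ℕ} (F : Fin n → X → Y → ℝ) :
    ∑ x : Fin n → X, ∑ y : Fin n → Y, ∏ t, F t (x t) (y t)
      = ∏ t, ∑ x, ∑ y, F t x y := by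
  have h1 : ∀ t : Fin n, (∑ x, ∑ y, F t x y) = ∑ z : X × Y, F t z.1 z.2 :=
    fun t => (Fintype.sum_prod_type (fun z : X × Y => F t z.1 z.2)).symm
  rw [Finset.prod_congr rfl (fun t _ => h1 t), Finset.prod_univ_sum, Fintype.piFinset_univ,
    sum_tuple_pair (fun v => ∏ t, F t (v t).1 (v t).2)]

end Lemmas

section Cheb
variable {X Y : Type} [Fintype X] [Fintype Y]

lemma inner_two_point {n : ℕ} (p G : X → Y → ℝ) (hp1 : ∑ x, ∑ y, p x y = 1)
    (t0 s0 : Fin n) :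
    ∑ x : Fin n → X, ∑ y : Fin n → Y,
        (∏ t, p (x t) (y t)) * (G (x t0) (y t0) * G (x s0) (y s0))
      = if t0 = s0 then ∑ x, ∑ y, p x y * G x y * G x y
        else (∑ x, ∑ y, p x y * G x y) * (∑ x, ∑ y, p x y * G x y) := by
  classical
  set F : Fin n → X → Y → ℝ := fun r x y =>
    p x y * (if r = t0 then G x y else 1) * (if r = s0 then G x y else 1) with hF
  have step1 : ∀ (x : Fin n → X) (y : Fin n → Y),
      (∏ r, F r (x r) (y r))
        = (∏ t, p (x t) (y t)) * (G (x t0) (y t0) * G (x s0) (y s0)) := by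
    intro x y
    rw [hF]
    simp only [Finset.prod_mul_distrib]
    rw [Finset.prod_ite_eq' Finset.univ t0 (fun r => G (x r) (y r)),
      Finset.prod_ite_eq' Finset.univ s0 (fun r => G (x r) (y r))]
    simp [mul_assoc]
  have step2 : ∑ x : Fin n → X, ∑ y : Fin n → Y,
      (∏ t, p (x t) (y t)) * (G (x t0) (y t0) * G (x s0) (y s0))
      = ∏ r, ∑ x, ∑ y, F r x y := by
    rw [← sum_prod_factorize F]
    exact Finset.sum_congr rfl fun x _ => Finset.sum_congr rfl fun y _ => (step1 x y).symm
  rw [step2]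
  by_cases hts : t0 = s0
  · subst hts
    have hFr : ∀ r : Fin n, (∑ x, ∑ y, F r x y)
        = if r = t0 then ∑ x, ∑ y, p x y * G x y * G x y else 1 := by
      intro r
      by_cases hr : r = t0 <;> simp [hF, hr, hp1, mul_assoc]
    rw [Finset.prod_congr rfl (fun r _ => hFr r),
      Finset.prod_ite_eq' Finset.univ t0 (fun _ => ∑ x, ∑ y, p x y * G x y * G x y)]
    simp
  · have hFr : ∀ r : Fin n, (∑ x, ∑ y, F r x y)
        = (if r = t0 then ∑ x, ∑ y, p x y * G x y else 1)
          * (if r = s0 then ∑ x, ∑ y, p x y * G x y else 1) := by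
      intro r
      by_cases hr : r = t0
      · subst hr
        simp [hF, hts, hp1]
      · by_cases hs : r = s0
        · simp [hF, hr, hs, hp1, (Ne.symm hts : s0 ≠ t0)]
        · simp [hF, hr, hs, hp1]
    rw [Finset.prod_congr rfl (fun r _ => hFr r), Finset.prod_mul_distrib,
      Finset.prod_ite_eq' Finset.univ t0 (fun _ => ∑ x, ∑ y, p x y * G x y),
      Finset.prod_ite_eq' Finset.univ s0 (fun _ => ∑ x, ∑ y, p x y * G x y)]
    simp [hts]

end Cheb

section Cheb2
variable {X Y : Type} [Fintype X] [Fintype Y]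

lemma second_moment {n : ℕ} (p G : X → Y → ℝ) (hp1 : ∑ x, ∑ y, p x y = 1) :
    ∑ x : Fin n → X, ∑ y : Fin n → Y,
        (∏ t, p (x t) (y t)) * (∑ t, G (x t) (y t)) ^ 2
      = n * (∑ x, ∑ y, p x y * G x y * G x y)
        + ((n : ℝ) ^ 2 - n) * (∑ x, ∑ y, p x y * G x y) ^ 2 := by
  classical
  set M1 := ∑ x, ∑ y, p x y * G x y with hM1
  set M2 := ∑ x, ∑ y, p x y * G x y * G x y with hM2
  have expand : ∀ (x : Fin n → X) (y : Fin n → Y),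
      (∏ t, p (x t) (y t)) * (∑ t, G (x t) (y t)) ^ 2
        = ∑ t, ∑ s, (∏ r, p (x r) (y r)) * (G (x t) (y t) * G (x s) (y s)) := by
    intro x y
    rw [sq, Finset.sum_mul_sum]
    rw [Finset.mul_sum]
    exact Finset.sum_congr rfl fun t _ => by rw [Finset.mul_sum]
  calc ∑ x : Fin n → X, ∑ y : Fin n → Y,
        (∏ t, p (x t) (y t)) * (∑ t, G (x t) (y t)) ^ 2
      = ∑ x : Fin n → X, ∑ y : Fin n → Y, ∑ t, ∑ s,
          (∏ r, p (x r) (y r)) * (G (x t) (y t) * G (x s) (y s)) :=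
        Finset.sum_congr rfl fun x _ => Finset.sum_congr rfl fun y _ => expand x y
    _ = ∑ x : Fin n → X, ∑ t, ∑ y : Fin n → Y, ∑ s,
          (∏ r, p (x r) (y r)) * (G (x t) (y t) * G (x s) (y s)) :=
        Finset.sum_congr rfl fun x _ => Finset.sum_comm
    _ = ∑ t, ∑ x : Fin n → X, ∑ y : Fin n → Y, ∑ s,
          (∏ r, p (x r) (y r)) * (G (x t) (y t) * G (x s) (y s)) := Finset.sum_comm
    _ = ∑ t, ∑ x : Fin n → X, ∑ s, ∑ y : Fin n → Y,
          (∏ r, p (x r) (y r)) * (G (x t) (y t) * G (x s) (y s)) :=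
        Finset.sum_congr rfl fun t _ => Finset.sum_congr rfl fun x _ => Finset.sum_comm
    _ = ∑ t, ∑ s, ∑ x : Fin n → X, ∑ y : Fin n → Y,
          (∏ r, p (x r) (y r)) * (G (x t) (y t) * G (x s) (y s)) :=
        Finset.sum_congr rfl fun t _ => Finset.sum_comm
    _ = ∑ t : Fin n, ∑ s : Fin n, (if t = s then M2 else M1 * M1) :=
        Finset.sum_congr rfl fun t _ => Finset.sum_congr rfl fun s _ =>
          inner_two_point p G hp1 t s
    _ = ∑ t : Fin n, ∑ s : Fin n, (M1 * M1 + if t = s then M2 - M1 * M1 else 0) :=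
        Finset.sum_congr rfl fun t _ => Finset.sum_congr rfl fun s _ => by
          split <;> ring
    _ = n * M2 + ((n : ℝ) ^ 2 - n) * M1 ^ 2 := by
        simp [Finset.sum_add_distrib, Finset.sum_ite_eq, Finset.card_univ]
        ring

end Cheb2

section Cheb3
variable {X Y : Type} [Fintype X] [Fintype Y]

lemma total_mass_pow {n : ℕ} (p : X → Y → ℝ) (hp1 : ∑ x, ∑ y, p x y = 1) :
    ∑ x : Fin n → X, ∑ y : Fin n → Y, ∏ t, p (x t) (y t) = 1 := by
  rw [sum_prod_factorize (fun _ => p)]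
  simp [hp1]

lemma aep_bound {n : ℕ} (p g : X → Y → ℝ)
    (hp0 : ∀ x y, 0 ≤ p x y) (hp1 : ∑ x, ∑ y, p x y = 1)
    (μ V : ℝ) (hμ : μ = ∑ x, ∑ y, p x y * g x y)
    (hV : V = ∑ x, ∑ y, p x y * (g x y - μ) * (g x y - μ))
    {γ : ℝ} (hγ : 0 < γ) (hn : 0 < n) :
    1 - V / (n * γ ^ 2) ≤ ∑ x : Fin n → X, ∑ y : Fin n → Y,
      (if |(∑ t, g (x t) (y t)) - n * μ| ≤ n * γ then ∏ t, p (x t) (y t) else 0) := by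
  classical
  set G : X → Y → ℝ := fun x y => g x y - μ with hG
  have hM1 : (∑ x, ∑ y, p x y * G x y) = 0 := by
    simp only [hG, mul_sub, Finset.sum_sub_distrib]
    rw [← hμ]
    have : ∑ x, ∑ y, p x y * μ = (∑ x, ∑ y, p x y) * μ := by
      rw [Finset.sum_mul]
      exact Finset.sum_congr rfl fun x _ => by rw [Finset.sum_mul]
    rw [this, hp1]; ring
  have hM2 : (∑ x, ∑ y, p x y * G x y * G x y) = V := by
    rw [hV]
  have hsm := second_moment (n := n) p G hp1
  rw [hM1, hM2] at hsm
  have hsm' : ∑ x : Fin n → X, ∑ y : Fin n → Y,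
      (∏ t, p (x t) (y t)) * (∑ t, G (x t) (y t)) ^ 2 = n * V := by
    rw [hsm]; ring
  have hSG : ∀ (x : Fin n → X) (y : Fin n → Y),
      (∑ t, G (x t) (y t)) = (∑ t, g (x t) (y t)) - n * μ := by
    intro x y
    simp [hG, Finset.sum_sub_distrib, Finset.card_univ, mul_comm]
  have hw0 : ∀ (x : Fin n → X) (y : Fin n → Y), 0 ≤ ∏ t, p (x t) (y t) :=
    fun x y => Finset.prod_nonneg fun t _ => hp0 _ _
  have hnγpos : (0:ℝ) < (n * γ) ^ 2 := by positivity
  -- the bad part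
  have hbad : ∑ x : Fin n → X, ∑ y : Fin n → Y,
      (if |(∑ t, g (x t) (y t)) - n * μ| ≤ n * γ then 0 else ∏ t, p (x t) (y t))
      ≤ V / (n * γ ^ 2) := by
    have step : ∀ (x : Fin n → X) (y : Fin n → Y),
        (if |(∑ t, g (x t) (y t)) - n * μ| ≤ n * γ then 0 else ∏ t, p (x t) (y t))
          ≤ (∏ t, p (x t) (y t)) * (∑ t, G (x t) (y t)) ^ 2 / (n * γ) ^ 2 := by
      intro x y
      split
      · exact div_nonneg (mul_nonneg (hw0 x y) (sq_nonneg _)) (le_of_lt hnγpos)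
      · rename_i hc
        push_neg at hc
        have h1 : (n * γ) ^ 2 ≤ (∑ t, G (x t) (y t)) ^ 2 := by
          rw [hSG x y]
          have h0 : (0:ℝ) ≤ (n:ℝ) * γ := by positivity
          calc ((n:ℝ) * γ) ^ 2 ≤ |(∑ t, g (x t) (y t)) - n * μ| ^ 2 :=
                pow_le_pow_left₀ h0 hc.le 2
            _ = _ := sq_abs _
        rw [le_div_iff₀ hnγpos]
        calc (∏ t, p (x t) (y t)) * (n * γ) ^ 2
            ≤ (∏ t, p (x t) (y t)) * (∑ t, G (x t) (y t)) ^ 2 :=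
              mul_le_mul_of_nonneg_left h1 (hw0 x y)
          _ = _ := rfl
    calc ∑ x : Fin n → X, ∑ y : Fin n → Y,
        (if |(∑ t, g (x t) (y t)) - n * μ| ≤ n * γ then 0 else ∏ t, p (x t) (y t))
        ≤ ∑ x : Fin n → X, ∑ y : Fin n → Y,
            (∏ t, p (x t) (y t)) * (∑ t, G (x t) (y t)) ^ 2 / (n * γ) ^ 2 :=
          Finset.sum_le_sum fun x _ => Finset.sum_le_sum fun y _ => step x y
      _ = (n * V) / (n * γ) ^ 2 := by
          rw [← hsm', Finset.sum_div]
          exact Finset.sum_congr rfl fun x _ => (Finset.sum_div _ _ _).symm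
      _ = V / (n * γ ^ 2) := by
          have hn' : (n:ℝ) ≠ 0 := Nat.cast_ne_zero.2 hn.ne'
          field_simp
  have hsplit : ∑ x : Fin n → X, ∑ y : Fin n → Y,
      (if |(∑ t, g (x t) (y t)) - n * μ| ≤ n * γ then ∏ t, p (x t) (y t) else 0)
      = 1 - ∑ x : Fin n → X, ∑ y : Fin n → Y,
        (if |(∑ t, g (x t) (y t)) - n * μ| ≤ n * γ then 0 else ∏ t, p (x t) (y t)) := by
    rw [← total_mass_pow (n := n) p hp1, ← Finset.sum_sub_distrib]
    refine Finset.sum_congr rfl fun x _ => ?_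
    rw [← Finset.sum_sub_distrib]
    refine Finset.sum_congr rfl fun y _ => ?_
    split <;> ring
  rw [hsplit]
  linarith

end Cheb3

section AEP
variable {X Y : Type} [Fintype X] [Fintype Y]

/-- log of inverse conditional likelihood -/
noncomputable def gfun (p : X → Y → ℝ) : X → Y → ℝ :=
  fun x y => Real.log ((∑ x', p x' y) / p x y)

noncomputable def Vfun (p : X → Y → ℝ) : ℝ :=
  ∑ x, ∑ y, p x y * (gfun p x y - condShannon p) * (gfun p x y - condShannon p)

/-- conditional probability -/
noncomputable def pcond (p : X → Y → ℝ) : X → Y → ℝ :=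
  fun x y => p x y / (∑ x', p x' y)

lemma mean_gfun (p : X → Y → ℝ) :
    ∑ x, ∑ y, p x y * gfun p x y = condShannon p := by
  rw [condShannon, Finset.sum_comm]
  rfl

lemma sum2_ite_le {A B : Type} [Fintype A] [Fintype B] (w : A → B → ℝ)
    (hw : ∀ a b, 0 ≤ w a b) (P Q : A → B → Prop) [∀ a b, Decidable (P a b)]
    [∀ a b, Decidable (Q a b)]
    (h : ∀ a b, 0 < w a b → P a b → Q a b) :
    ∑ a, ∑ b, (if P a b then w a b else 0) ≤ ∑ a, ∑ b, (if Q a b then w a b else 0) := by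
  refine Finset.sum_le_sum fun a _ => Finset.sum_le_sum fun b _ => ?_
  by_cases hP : P a b
  · rw [if_pos hP]
    by_cases hQ : Q a b
    · rw [if_pos hQ]
    · rw [if_neg hQ]
      by_contra hlt
      push_neg at hlt
      exact hQ (h a b hlt hP)
  · rw [if_neg hP]
    split
    · exact hw a b
    · exact le_refl 0

lemma prod_pcond_eq_exp {n : ℕ} (p : X → Y → ℝ) (hp0 : ∀ x y, 0 ≤ p x y)
    (x : Fin n → X) (y : Fin n → Y) (hpos : 0 < ∏ t, p (x t) (y t)) :
    ∏ t, pcond p (x t) (y t) = Real.exp (-(∑ t, gfun p (x t) (y t))) := by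
  have hfac : ∀ t, 0 < p (x t) (y t) := by
    intro t
    rcases (hp0 (x t) (y t)).lt_or_eq with h | h
    · exact h
    · exfalso
      rw [Finset.prod_eq_zero (Finset.mem_univ t) h.symm] at hpos
      exact lt_irrefl 0 hpos
  have hpY : ∀ t, 0 < ∑ x', p x' (y t) := fun t =>
    lt_of_lt_of_le (hfac t)
      (Finset.single_le_sum (fun x' _ => hp0 x' (y t)) (Finset.mem_univ (x t)))
  have hper : ∀ t, pcond p (x t) (y t) = Real.exp (-(gfun p (x t) (y t))) := by
    intro t
    rw [gfun, Real.exp_neg, Real.exp_log (div_pos (hpY t) (hfac t))]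
    rw [pcond, inv_div]
  rw [Finset.prod_congr rfl fun t _ => hper t, ← Real.exp_sum]
  rw [← Finset.sum_neg_distrib]

/-- Two-sided typicality: the set where the conditional likelihood is between
`exp (-(n*(H+γ)))` and `exp (-(n*(H-γ)))` has probability at least `1 - V/(n γ²)`. -/
lemma aep_typical {n : ℕ} (p : X → Y → ℝ)
    (hp0 : ∀ x y, 0 ≤ p x y) (hp1 : ∑ x, ∑ y, p x y = 1)
    {γ : ℝ} (hγ : 0 < γ) (hn : 0 < n) :
    1 - Vfun p / (n * γ ^ 2) ≤ ∑ x : Fin n → X, ∑ y : Fin n → Y,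
      (if (Real.exp (-(n * (condShannon p + γ))) ≤ ∏ t, pcond p (x t) (y t)
            ∧ (∏ t, pcond p (x t) (y t)) ≤ Real.exp (-(n * (condShannon p - γ))))
        then ∏ t, p (x t) (y t) else 0) := by
  classical
  have key := aep_bound (n := n) p (gfun p) hp0 hp1 (condShannon p) (Vfun p)
    (mean_gfun p).symm rfl hγ hn
  refine le_trans key (sum2_ite_le _ (fun x y => Finset.prod_nonneg fun t _ => hp0 _ _) _ _ ?_)
  intro x y hpos hA
  rw [prod_pcond_eq_exp p hp0 x y hpos]
  rw [abs_le] at hA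
  constructor
  · rw [Real.exp_le_exp]
    nlinarith [hA.2]
  · rw [Real.exp_le_exp]
    nlinarith [hA.1]

end AEP

section Tools
variable {I : Type} [Fintype I]

/-- counting: number of indices with mass ≥ θ is at most 1/θ -/
lemma card_ge_le (s : Finset I) (f : I → ℝ) (hf0 : ∀ i ∈ s, 0 ≤ f i)
    (hf1 : ∑ i ∈ s, f i ≤ 1) {θ : ℝ} (hθ : 0 < θ) :
    ((s.filter (fun i => θ ≤ f i)).card : ℝ) ≤ 1 / θ := by
  rw [le_div_iff₀ hθ]
  calc ((s.filter (fun i => θ ≤ f i)).card : ℝ) * θ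
      = (s.filter (fun i => θ ≤ f i)).card • θ := (nsmul_eq_mul _ _).symm
    _ ≤ ∑ i ∈ s.filter (fun i => θ ≤ f i), f i :=
        Finset.card_nsmul_le_sum _ f θ (fun i hi => (Finset.mem_filter.1 hi).2)
    _ ≤ ∑ i ∈ s, f i :=
        Finset.sum_le_sum_of_subset_of_nonneg (Finset.filter_subset _ _)
          (fun i hi _ => hf0 i hi)
    _ ≤ 1 := hf1

/-- power mean upper bound: `∑ w^α ≤ card^(1-α) (∑ w)^α` -/
lemma sum_rpow_le_card_rpow (s : Finset I) (w : I → ℝ) (hw : ∀ i ∈ s, 0 ≤ w i)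
    {α : ℝ} (hα0 : 0 < α) (hα1 : α < 1) :
    ∑ i ∈ s, w i ^ α ≤ (s.card : ℝ) ^ (1 - α) * (∑ i ∈ s, w i) ^ α := by
  rcases s.eq_empty_or_nonempty with rfl | hs
  · simp
    exact mul_nonneg (Real.rpow_nonneg le_rfl _) (Real.rpow_nonneg le_rfl _)
  have hN : (0:ℝ) < s.card := by exact_mod_cast Finset.card_pos.mpr hs
  have hp : (1:ℝ) ≤ 1/α := by rw [le_div_iff₀ hα0, one_mul]; exact hα1.le
  have key := Real.rpow_arith_mean_le_arith_mean_rpow s (fun _ => 1 / (s.card : ℝ))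
    (fun i => w i ^ α) (fun i _ => by positivity)
    (by rw [Finset.sum_const, nsmul_eq_mul]; field_simp)
    (fun i hi => Real.rpow_nonneg (hw i hi) α) hp
  have hz : ∀ i ∈ s, ((w i ^ α) ^ (1/α)) = w i := fun i hi => by
    rw [← Real.rpow_mul (hw i hi), mul_one_div_cancel hα0.ne', Real.rpow_one]
  have key2 : ((1 / (s.card:ℝ)) * ∑ i ∈ s, w i ^ α) ^ (1/α)
      ≤ (1 / (s.card:ℝ)) * ∑ i ∈ s, w i := by
    calc ((1 / (s.card:ℝ)) * ∑ i ∈ s, w i ^ α) ^ (1/α)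
        = (∑ i ∈ s, (1 / (s.card:ℝ)) * w i ^ α) ^ (1/α) := by rw [Finset.mul_sum]
      _ ≤ ∑ i ∈ s, (1 / (s.card:ℝ)) * (w i ^ α) ^ (1/α) := key
      _ = ∑ i ∈ s, (1 / (s.card:ℝ)) * w i :=
          Finset.sum_congr rfl fun i hi => by rw [hz i hi]
      _ = (1 / (s.card:ℝ)) * ∑ i ∈ s, w i := (Finset.mul_sum _ _ _).symm
  have hA : 0 ≤ ∑ i ∈ s, w i ^ α :=
    Finset.sum_nonneg fun i hi => Real.rpow_nonneg (hw i hi) _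
  have hB : 0 ≤ ∑ i ∈ s, w i := Finset.sum_nonneg hw
  have key3 : (1 / (s.card:ℝ)) * ∑ i ∈ s, w i ^ α
      ≤ ((1 / (s.card:ℝ)) * ∑ i ∈ s, w i) ^ α := by
    have hbase : 0 ≤ (1 / (s.card:ℝ)) * ∑ i ∈ s, w i ^ α := by positivity
    have h := Real.rpow_le_rpow (Real.rpow_nonneg hbase _) key2 hα0.le
    rwa [← Real.rpow_mul hbase, one_div_mul_cancel hα0.ne', Real.rpow_one] at h
  have hNα : ((1:ℝ) / s.card) ^ α = ((s.card:ℝ) ^ α)⁻¹ := by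
    rw [one_div, Real.inv_rpow hN.le]
  have hNpow : (s.card : ℝ) ^ (1 - α) = (s.card:ℝ) * ((s.card:ℝ) ^ α)⁻¹ := by
    rw [sub_eq_add_neg, Real.rpow_add hN, Real.rpow_one, Real.rpow_neg hN.le]
  calc ∑ i ∈ s, w i ^ α
      = (s.card:ℝ) * ((1 / (s.card:ℝ)) * ∑ i ∈ s, w i ^ α) := by field_simp
    _ ≤ (s.card:ℝ) * (((1 / (s.card:ℝ)) * ∑ i ∈ s, w i) ^ α) :=
        mul_le_mul_of_nonneg_left key3 hN.le
    _ = (s.card : ℝ) ^ (1-α) * (∑ i ∈ s, w i) ^ α := by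
        rw [Real.mul_rpow (by positivity) hB, hNα, hNpow]; ring

/-- Jensen/Hölder lower bound -/
lemma rpow_sum_le_weighted (w μ : I → ℝ) (hw : ∀ i, 0 ≤ w i)
    (hwsum : ∑ i, w i = 1) (hμ0 : ∀ i, 0 ≤ μ i) (hμw : ∀ i, μ i ≤ w i)
    {α : ℝ} (hα0 : 0 < α) (hα1 : α < 1) :
    (∑ i, μ i) ^ (1/α) ≤ ∑ i, w i ^ (1 - 1/α) * μ i ^ (1/α) := by
  classical
  have hp : (1:ℝ) ≤ 1/α := by rw [le_div_iff₀ hα0, one_mul]; exact hα1.le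
  have hpne : (1:ℝ)/α ≠ 0 := by positivity
  have hp1ne : (1:ℝ) - 1/α ≠ 0 := by
    have : (1:ℝ) < 1/α := by rw [lt_div_iff₀ hα0, one_mul]; exact hα1
    linarith
  have key := Real.rpow_arith_mean_le_arith_mean_rpow Finset.univ w (fun i => μ i / w i)
    (fun i _ => hw i) hwsum (fun i _ => div_nonneg (hμ0 i) (hw i)) hp
  have h1 : ∑ i, w i * (μ i / w i) = ∑ i, μ i := Finset.sum_congr rfl fun i _ => by
    rcases (hw i).lt_or_eq with h | h
    · field_simp
    · have hμz : μ i = 0 := le_antisymm (h ▸ hμw i) (hμ0 i)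
      rw [← h, hμz]; simp
  have h2 : ∀ i, w i * (μ i / w i) ^ (1/α) = w i ^ (1 - 1/α) * μ i ^ (1/α) := by
    intro i
    rcases (hw i).lt_or_eq with h | h
    · have hwp : (0:ℝ) < w i ^ ((1:ℝ)/α) := Real.rpow_pos_of_pos h _
      rw [Real.div_rpow (hμ0 i) (hw i), Real.rpow_sub h, Real.rpow_one]
      field_simp
    · have hμz : μ i = 0 := le_antisymm (h ▸ hμw i) (hμ0 i)
      rw [← h, hμz, Real.zero_rpow hpne, Real.zero_rpow hp1ne]
      simp
  calc (∑ i, μ i) ^ ((1:ℝ)/α) = (∑ i, w i * (μ i / w i)) ^ ((1:ℝ)/α) := by rw [h1]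
    _ ≤ ∑ i, w i * (μ i / w i) ^ ((1:ℝ)/α) := key
    _ = ∑ i, w i ^ (1 - 1/α) * μ i ^ (1/α) := Finset.sum_congr rfl fun i _ => h2 i

end Tools

section Main
variable {X Y : Type} [Fintype X] [Fintype Y]

/-- the mixture distribution on `n`-tuples -/
noncomputable def Pmix (m : ℕ) (a : Fin m → ℝ) (Pc : Fin m → X → Y → ℝ) (n : ℕ) :
    (Fin n → X) → (Fin n → Y) → ℝ :=
  fun x y => ∑ k, a k * ∏ t, Pc k (x t) (y t)

variable {m : ℕ} {a : Fin m → ℝ} {Pc : Fin m → X → Y → ℝ}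

lemma sum_prod_single {n : ℕ} (f : Fin n → X → ℝ) :
    ∑ x : Fin n → X, ∏ t, f t (x t) = ∏ t, ∑ x', f t x' := by
  rw [show (∏ t, ∑ x', f t x') = ∏ t, ∑ x' ∈ Finset.univ, f t x' from rfl,
    Finset.prod_univ_sum, Fintype.piFinset_univ]

lemma Pmix_nonneg (hPc0 : ∀ i x y, 0 ≤ Pc i x y) (ha : ∀ i, 0 < a i) {n : ℕ}
    (x : Fin n → X) (y : Fin n → Y) : 0 ≤ Pmix m a Pc n x y :=
  Finset.sum_nonneg fun k _ => mul_nonneg (ha k).le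
    (Finset.prod_nonneg fun t _ => hPc0 _ _ _)

lemma swap_k_out {n : ℕ} (F : Fin m → (Fin n → X) → (Fin n → Y) → ℝ) :
    ∑ x : Fin n → X, ∑ y : Fin n → Y, ∑ k, F k x y
      = ∑ k, ∑ x : Fin n → X, ∑ y : Fin n → Y, F k x y := by
  calc ∑ x : Fin n → X, ∑ y : Fin n → Y, ∑ k, F k x y
      = ∑ x : Fin n → X, ∑ k, ∑ y : Fin n → Y, F k x y :=
        Finset.sum_congr rfl fun x _ => Finset.sum_comm
    _ = ∑ k, ∑ x : Fin n → X, ∑ y : Fin n → Y, F k x y := Finset.sum_comm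

lemma Pmix_total (ha : ∀ i, 0 < a i) (hsum : ∑ i, a i = 1)
    (hPc1 : ∀ i, ∑ x, ∑ y, Pc i x y = 1) {n : ℕ} :
    ∑ x : Fin n → X, ∑ y : Fin n → Y, Pmix m a Pc n x y = 1 := by
  unfold Pmix
  rw [swap_k_out (fun k x y => a k * ∏ t, Pc k (x t) (y t))]
  rw [← hsum]
  refine Finset.sum_congr rfl fun k _ => ?_
  have : ∑ x : Fin n → X, ∑ y : Fin n → Y, a k * ∏ t, Pc k (x t) (y t)
      = a k * ∑ x : Fin n → X, ∑ y : Fin n → Y, ∏ t, Pc k (x t) (y t) := by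
    rw [Finset.mul_sum]
    exact Finset.sum_congr rfl fun x _ => (Finset.mul_sum _ _ _).symm
  rw [this, total_mass_pow _ (hPc1 k), mul_one]

/-- marginal of a component is a probability vector on `Y` -/
lemma pY_total (hPc1 : ∀ i, ∑ x, ∑ y, Pc i x y = 1) (k : Fin m) :
    ∑ y, ∑ x', Pc k x' y = 1 := by rw [Finset.sum_comm]; exact hPc1 k

lemma pY_le_one (hPc0 : ∀ i x y, 0 ≤ Pc i x y) (hPc1 : ∀ i, ∑ x, ∑ y, Pc i x y = 1)
    (k : Fin m) (y : Y) : ∑ x', Pc k x' y ≤ 1 := by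
  rw [← pY_total hPc1 k]
  exact Finset.single_le_sum (f := fun y => ∑ x', Pc k x' y)
    (fun y' _ => Finset.sum_nonneg fun x' _ => hPc0 _ _ _) (Finset.mem_univ y)

lemma pcond_nonneg (hPc0 : ∀ i x y, 0 ≤ Pc i x y) (k : Fin m) (x : X) (y : Y) :
    0 ≤ pcond (Pc k) x y :=
  div_nonneg (hPc0 k x y) (Finset.sum_nonneg fun x' _ => hPc0 k x' y)

lemma sum_pcond_le_one (hPc0 : ∀ i x y, 0 ≤ Pc i x y) (k : Fin m) (y : Y) :
    ∑ x', pcond (Pc k) x' y ≤ 1 := by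
  unfold pcond
  rcases eq_or_lt_of_le (Finset.sum_nonneg fun x' _ => hPc0 k x' y) with h | h
  · simp only [show (∑ x', Pc k x' y) = 0 from h.symm, div_zero]
    simp
  · rw [← Finset.sum_div, div_le_one h]

/-- component factorization `Pc = pcond * pY` -/
lemma Pc_eq_pcond_mul (hPc0 : ∀ i x y, 0 ≤ Pc i x y) (k : Fin m) (x : X) (y : Y) :
    Pc k x y = pcond (Pc k) x y * (∑ x', Pc k x' y) := by
  unfold pcond
  rcases eq_or_lt_of_le (Finset.sum_nonneg fun x' _ => hPc0 k x' y) with h | h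
  · have hx : Pc k x y = 0 := by
      have h1 := Finset.single_le_sum (fun x' _ => hPc0 k x' y) (Finset.mem_univ x)
      linarith [hPc0 k x y]
    rw [hx, ← h]; simp
  · field_simp

end Main

section SetFacts
variable {A B : Type} [Fintype A] [Fintype B]

lemma renyi_nonempty (P : A → B → ℝ) (hP0 : ∀ x y, 0 ≤ P x y) {α ε : ℝ}
    (hmass : 1 - ε ≤ ∑ x, ∑ y, P x y) :
    Set.Nonempty { h : ℝ | ∃ Q : A → B → ℝ, (∀ x y, 0 ≤ Q x y ∧ Q x y ≤ P x y) ∧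
      (1 - ε ≤ ∑ x, ∑ y, Q x y) ∧
      h = (α / (1 - α)) * Real.log (∑ y, (∑ x, Q x y ^ α) ^ (1 / α)) } :=
  ⟨_, ⟨P, fun x y => ⟨hP0 x y, le_refl _⟩, hmass, rfl⟩⟩

lemma rpow_rpow_inv {q : ℝ} (hq : 0 ≤ q) {α : ℝ} (hα0 : 0 < α) :
    (q ^ α) ^ (1/α) = q := by
  rw [← Real.rpow_mul hq, mul_one_div_cancel hα0.ne', Real.rpow_one]

lemma renyi_bddBelow (P : A → B → ℝ) {α ε : ℝ} (hα : α ∈ Set.Ioo (0:ℝ) 1) (hε : ε < 1) :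
    BddBelow { h : ℝ | ∃ Q : A → B → ℝ, (∀ x y, 0 ≤ Q x y ∧ Q x y ≤ P x y) ∧
      (1 - ε ≤ ∑ x, ∑ y, Q x y) ∧
      h = (α / (1 - α)) * Real.log (∑ y, (∑ x, Q x y ^ α) ^ (1 / α)) } := by
  classical
  set N : ℝ := (Fintype.card A : ℝ) * (Fintype.card B : ℝ) with hN
  set c : ℝ := α / (1 - α) with hc
  have hc0 : 0 ≤ c := div_nonneg hα.1.le (by linarith [hα.2])
  have hε' : (0:ℝ) < 1 - ε := by linarith
  refine ⟨c * Real.log ((1 - ε) / N), fun h hh => ?_⟩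
  obtain ⟨Q, hQ, hmass, rfl⟩ := hh
  rcases isEmpty_or_nonempty A with hA | hA
  · exfalso
    rw [Finset.univ_eq_empty, Finset.sum_empty] at hmass
    linarith
  rcases isEmpty_or_nonempty B with hB | hB
  · exfalso
    have hz : ∑ x : A, ∑ y : B, Q x y = 0 :=
      Finset.sum_eq_zero fun x _ => by rw [Finset.univ_eq_empty, Finset.sum_empty]
    rw [hz] at hmass
    linarith
  have hNpos : (0:ℝ) < N := by
    rw [hN]
    have h1 : 0 < Fintype.card A := Fintype.card_pos
    have h2 : 0 < Fintype.card B := Fintype.card_pos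
    exact mul_pos (by exact_mod_cast h1) (by exact_mod_cast h2)
  have hex : ∃ x0 y0, (1 - ε) / N ≤ Q x0 y0 := by
    by_contra hcon
    push_neg at hcon
    have hlt : ∑ x : A, ∑ y : B, Q x y
        < ∑ x : A, ∑ y : B, (1 - ε) / N := by
      refine Finset.sum_lt_sum_of_nonempty Finset.univ_nonempty fun x _ => ?_
      exact Finset.sum_lt_sum_of_nonempty Finset.univ_nonempty fun y _ => hcon x y
    have hconst : ∑ x : A, ∑ y : B, (1 - ε) / N = 1 - ε := by
      rw [Finset.sum_const, Finset.sum_const, Finset.card_univ, Finset.card_univ,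
        nsmul_eq_mul, nsmul_eq_mul, hN]
      field_simp
    rw [hconst] at hlt
    linarith
  obtain ⟨x0, y0, hbig⟩ := hex
  have hβpos : (0:ℝ) < (1 - ε) / N := div_pos hε' hNpos
  have hQ0 : (0:ℝ) < Q x0 y0 := lt_of_lt_of_le hβpos hbig
  have hT : (1 - ε) / N ≤ ∑ y, (∑ x, Q x y ^ α) ^ (1/α) := by
    have hα' : (0:ℝ) ≤ 1/α := (one_div_pos.mpr hα.1).le
    have s2 : Q x0 y0 ^ α ≤ ∑ x, Q x y0 ^ α :=
      Finset.single_le_sum (fun x _ => Real.rpow_nonneg (hQ x y0).1 α) (Finset.mem_univ x0)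
    have s3 : (Q x0 y0 ^ α) ^ (1/α) ≤ (∑ x, Q x y0 ^ α) ^ (1/α) :=
      Real.rpow_le_rpow (Real.rpow_nonneg hQ0.le α) s2 hα'
    have s4 : (∑ x, Q x y0 ^ α) ^ (1/α) ≤ ∑ y, (∑ x, Q x y ^ α) ^ (1/α) :=
      Finset.single_le_sum (fun y _ => Real.rpow_nonneg
        (Finset.sum_nonneg fun x _ => Real.rpow_nonneg (hQ x y).1 α) _) (Finset.mem_univ y0)
    calc (1 - ε) / N ≤ Q x0 y0 := hbig
      _ = (Q x0 y0 ^ α) ^ (1/α) := (rpow_rpow_inv hQ0.le hα.1).symm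
      _ ≤ _ := le_trans s3 s4
  calc c * Real.log ((1 - ε) / N)
      ≤ c * Real.log (∑ y, (∑ x, Q x y ^ α) ^ (1/α)) :=
        mul_le_mul_of_nonneg_left (Real.log_le_log hβpos hT) hc0
    _ = _ := rfl

end SetFacts

section Main2
variable {X Y : Type} [Fintype X] [Fintype Y]
variable {m : ℕ} {a : Fin m → ℝ} {Pc : Fin m → X → Y → ℝ}

lemma mixture_ite {n : ℕ} (C : (Fin n → X) → (Fin n → Y) → Prop)
    [∀ x y, Decidable (C x y)] :
    ∑ x : Fin n → X, ∑ y : Fin n → Y, (if C x y then Pmix m a Pc n x y else 0)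
      = ∑ k, a k * ∑ x : Fin n → X, ∑ y : Fin n → Y,
          (if C x y then ∏ t, Pc k (x t) (y t) else 0) := by
  have point : ∀ x y, (if C x y then Pmix m a Pc n x y else 0)
      = ∑ k, a k * (if C x y then ∏ t, Pc k (x t) (y t) else 0) := by
    intro x y
    split
    · rfl
    · simp
  calc ∑ x : Fin n → X, ∑ y : Fin n → Y, (if C x y then Pmix m a Pc n x y else 0)
      = ∑ x : Fin n → X, ∑ y : Fin n → Y, ∑ k,
          a k * (if C x y then ∏ t, Pc k (x t) (y t) else 0) :=
        Finset.sum_congr rfl fun x _ => Finset.sum_congr rfl fun y _ => point x y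
    _ = ∑ k, ∑ x : Fin n → X, ∑ y : Fin n → Y,
          a k * (if C x y then ∏ t, Pc k (x t) (y t) else 0) := swap_k_out _
    _ = _ := Finset.sum_congr rfl fun k _ => by
        rw [Finset.mul_sum]
        exact Finset.sum_congr rfl fun x _ => (Finset.mul_sum _ _ _).symm

lemma condShannon_nonneg (p : X → Y → ℝ) (hp0 : ∀ x y, 0 ≤ p x y) :
    0 ≤ condShannon p := by
  rw [condShannon]
  refine Finset.sum_nonneg fun y _ => Finset.sum_nonneg fun x _ => ?_
  rcases (hp0 x y).lt_or_eq with h | h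
  · refine mul_nonneg (hp0 x y) (Real.log_nonneg ?_)
    rw [le_div_iff₀ h, one_mul]
    exact Finset.single_le_sum (fun x' _ => hp0 x' y) (Finset.mem_univ x)
  · rw [← h, zero_mul]

lemma Vfun_nonneg (p : X → Y → ℝ) (hp0 : ∀ x y, 0 ≤ p x y) : 0 ≤ Vfun p := by
  refine Finset.sum_nonneg fun x _ => Finset.sum_nonneg fun y _ => ?_
  rw [mul_assoc]
  exact mul_nonneg (hp0 x y) (mul_self_nonneg _)

lemma sum_filter_ge (a : Fin m → ℝ) (hsum : ∑ i, a i = 1) (i : Fin m) :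
    ∑ j ∈ Finset.univ.filter (fun k => i ≤ k), a j
      = 1 - ∑ j ∈ Finset.univ.filter (· < i), a j := by
  have h := Finset.sum_filter_add_sum_filter_not Finset.univ (· < i) a
  rw [hsum] at h
  have hcong : Finset.univ.filter (fun k => ¬ k < i) = Finset.univ.filter (fun k => i ≤ k) :=
    Finset.filter_congr fun k _ => by rw [not_lt]
  rw [hcong] at h
  linarith

end Main2

section Upper
variable {X Y : Type} [Fintype X] [Fintype Y]
variable {m : ℕ} {a : Fin m → ℝ} {Pc : Fin m → X → Y → ℝ}

lemma upper_eventually (ha : ∀ i, 0 < a i) (hsum : ∑ i, a i = 1)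
    (hPc0 : ∀ i x y, 0 ≤ Pc i x y) (hPc1 : ∀ i, ∑ x, ∑ y, Pc i x y = 1)
    (hdec : ∀ i j : Fin m, i < j → condShannon (Pc j) < condShannon (Pc i))
    {α : ℝ} (hα : α ∈ Set.Ioo (0:ℝ) 1) (i : Fin m) {ε' : ℝ}
    (hlo : ∑ j ∈ Finset.univ.filter (· < i), a j < ε') (hε1 : ε' < 1)
    {γ : ℝ} (hγ : 0 < γ) :
    ∀ᶠ n : ℕ in atTop,
      condSmoothRenyiF (Pmix m a Pc n) α ε' ≤ n * (condShannon (Pc i) + γ) := by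
  classical
  set Hi := condShannon (Pc i) with hHi
  set Ai := ∑ j ∈ Finset.univ.filter (· < i), a j with hAi
  set C1 : ℝ := (∑ k, a k * Vfun (Pc k)) / ((γ/2)^2) with hC1
  have hE1 : ∀ᶠ n : ℕ in atTop, C1 / n ≤ ε' - Ai := by
    have h0 : Tendsto (fun n : ℕ => C1 / n) atTop (nhds 0) :=
      tendsto_const_div_atTop_nhds_zero_nat C1
    exact h0.eventually_le_const (by linarith)
  have hE2 : ∀ᶠ n : ℕ in atTop, Real.log m ≤ n * (γ/2) := by
    have h0 : Tendsto (fun n : ℕ => (n:ℝ) * (γ/2)) atTop atTop :=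
      Tendsto.atTop_mul_const (half_pos hγ) tendsto_natCast_atTop_atTop
    exact h0.eventually_ge_atTop _
  filter_upwards [hE1, hE2, eventually_ge_atTop 1] with n h1 h2 hn1
  have hnpos : 0 < n := hn1
  have hnR : (0:ℝ) < n := by exact_mod_cast hnpos
  set Pn := Pmix m a Pc n with hPn
  have hP0 : ∀ x y, 0 ≤ Pn x y := fun x y => Pmix_nonneg hPc0 ha x y
  have hPtot : ∑ x, ∑ y, Pn x y = 1 := Pmix_total ha hsum hPc1
  -- the typical-union predicate
  set Sp : (Fin n → X) → (Fin n → Y) → Prop := fun x y =>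
    ∃ k, i ≤ k ∧ Real.exp (-(n * (condShannon (Pc k) + γ/2)))
      ≤ ∏ t, pcond (Pc k) (x t) (y t) with hSp
  set Q : (Fin n → X) → (Fin n → Y) → ℝ := fun x y => if Sp x y then Pn x y else 0 with hQdef
  have hQP : ∀ x y, 0 ≤ Q x y ∧ Q x y ≤ Pn x y := by
    intro x y
    constructor
    · rw [hQdef]; dsimp only; split
      · exact hP0 x y
      · exact le_refl 0
    · rw [hQdef]; dsimp only; split
      · exact le_refl _
      · exact hP0 x y
  -- mass bound
  have hmass : 1 - ε' ≤ ∑ x, ∑ y, Q x y := by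
    have hsplit : ∑ x, ∑ y, Q x y
        = ∑ k, a k * ∑ x : Fin n → X, ∑ y : Fin n → Y,
            (if Sp x y then ∏ t, Pc k (x t) (y t) else 0) := mixture_ite Sp
    have hTk : ∀ k, i ≤ k → (1 : ℝ) - Vfun (Pc k) / (n * (γ/2)^2)
        ≤ ∑ x : Fin n → X, ∑ y : Fin n → Y,
            (if Sp x y then ∏ t, Pc k (x t) (y t) else 0) := by
      intro k hk
      refine le_trans (aep_typical (Pc k) (hPc0 k) (hPc1 k) (half_pos hγ) hnpos) ?_
      refine sum2_ite_le _ (fun x y => Finset.prod_nonneg fun t _ => hPc0 k _ _) _ _ ?_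
      intro x y _ hA
      exact ⟨k, hk, hA.1⟩
    have hterm : ∀ k ∈ Finset.univ.filter (fun k => i ≤ k),
        a k - a k * Vfun (Pc k) / (n * (γ/2)^2)
          ≤ a k * ∑ x : Fin n → X, ∑ y : Fin n → Y,
            (if Sp x y then ∏ t, Pc k (x t) (y t) else 0) := by
      intro k hk
      have hk' := (Finset.mem_filter.1 hk).2
      have := mul_le_mul_of_nonneg_left (hTk k hk') (ha k).le
      calc a k - a k * Vfun (Pc k) / (n * (γ/2)^2)
          = a k * (1 - Vfun (Pc k) / (n * (γ/2)^2)) := by ring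
        _ ≤ _ := this
    have hsub : ∑ k ∈ Finset.univ.filter (fun k => i ≤ k),
        (a k - a k * Vfun (Pc k) / (n * (γ/2)^2))
        ≤ ∑ k, a k * ∑ x : Fin n → X, ∑ y : Fin n → Y,
            (if Sp x y then ∏ t, Pc k (x t) (y t) else 0) := by
      refine le_trans (Finset.sum_le_sum hterm) ?_
      refine Finset.sum_le_sum_of_subset_of_nonneg (Finset.filter_subset _ _) ?_
      intro k _ _
      refine mul_nonneg (ha k).le (Finset.sum_nonneg fun x _ => Finset.sum_nonneg fun y _ => ?_)
      split
      · exact Finset.prod_nonneg fun t _ => hPc0 k _ _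
      · exact le_refl 0
    have hgesum : ∑ k ∈ Finset.univ.filter (fun k => i ≤ k),
        (a k - a k * Vfun (Pc k) / (n * (γ/2)^2))
        = (1 - Ai) - (∑ k ∈ Finset.univ.filter (fun k => i ≤ k),
            a k * Vfun (Pc k)) / (n * (γ/2)^2) := by
      rw [Finset.sum_sub_distrib, sum_filter_ge a hsum i, ← hAi, Finset.sum_div]
    have hVle : (∑ k ∈ Finset.univ.filter (fun k => i ≤ k), a k * Vfun (Pc k))
        / (n * (γ/2)^2) ≤ C1 / n := by
      rw [hC1]
      have hnum : ∑ k ∈ Finset.univ.filter (fun k => i ≤ k), a k * Vfun (Pc k)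
          ≤ ∑ k, a k * Vfun (Pc k) :=
        Finset.sum_le_sum_of_subset_of_nonneg (Finset.filter_subset _ _)
          (fun k _ _ => mul_nonneg (ha k).le (Vfun_nonneg _ (hPc0 k)))
      calc (∑ k ∈ Finset.univ.filter (fun k => i ≤ k), a k * Vfun (Pc k)) / (n * (γ/2)^2)
          ≤ (∑ k, a k * Vfun (Pc k)) / (n * (γ/2)^2) := by
            have hd : (0:ℝ) < (n:ℝ) * (γ/2)^2 := by positivity
            exact (div_le_div_iff_of_pos_right hd).2 hnum
        _ = C1 / n := by rw [div_div, mul_comm]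
    rw [hsplit]
    refine le_trans ?_ hsub
    rw [hgesum]
    have := le_trans hVle h1
    linarith
  -- value bound
  set T := ∑ y : Fin n → Y, (∑ x : Fin n → X, Q x y ^ α) ^ (1/α) with hT
  set M : ℝ := m * Real.exp (n * (Hi + γ/2)) with hM
  have hmR : (0:ℝ) < m := by exact_mod_cast i.pos
  have hMpos : 0 < M := by
    rw [hM]
    exact mul_pos hmR (Real.exp_pos _)
  have hexp0 : (0:ℝ) ≤ (1-α) * (1/α) :=
    mul_nonneg (by linarith [hα.2]) (one_div_pos.mpr hα.1).le
  have hμy_nonneg : ∀ y : Fin n → Y, 0 ≤ ∑ x, Q x y :=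
    fun y => Finset.sum_nonneg fun x _ => (hQP x y).1
  have hybound : ∀ y : Fin n → Y,
      (∑ x, Q x y ^ α) ^ (1/α) ≤ M ^ ((1-α) * (1/α)) * ∑ x, Q x y := by
    intro y
    set Sy := Finset.univ.filter (fun x : Fin n → X => Sp x y) with hSy
    have hQα : ∑ x, Q x y ^ α = ∑ x ∈ Sy, Pn x y ^ α := by
      rw [hSy, Finset.sum_filter]
      refine (Finset.sum_congr rfl fun x _ => ?_).symm
      rw [hQdef]; dsimp only
      split
      · rfl
      · exact (Real.zero_rpow hα.1.ne').symm
    have hQsum : ∑ x ∈ Sy, Pn x y = ∑ x, Q x y := by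
      rw [hSy, Finset.sum_filter]
    have hcard : (Sy.card : ℝ) ≤ M := by
      have hsub : Sy ⊆ (Finset.univ.filter (fun k : Fin m => i ≤ k)).biUnion
          (fun k => Finset.univ.filter (fun x : Fin n → X =>
            Real.exp (-(n * (condShannon (Pc k) + γ/2))) ≤ ∏ t, pcond (Pc k) (x t) (y t))) := by
        intro x hx
        obtain ⟨k, hk, hkle⟩ := (Finset.mem_filter.1 hx).2
        exact Finset.mem_biUnion.2 ⟨k, Finset.mem_filter.2 ⟨Finset.mem_univ k, hk⟩,
          Finset.mem_filter.2 ⟨Finset.mem_univ x, hkle⟩⟩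
      have h2' := le_trans (Finset.card_le_card hsub) Finset.card_biUnion_le
      have h3 : (Sy.card : ℝ) ≤ ∑ k ∈ Finset.univ.filter (fun k : Fin m => i ≤ k),
          ((Finset.univ.filter (fun x : Fin n → X =>
            Real.exp (-(n * (condShannon (Pc k) + γ/2)))
              ≤ ∏ t, pcond (Pc k) (x t) (y t))).card : ℝ) := by
        exact_mod_cast h2'
      have h4 : ∀ k ∈ Finset.univ.filter (fun k : Fin m => i ≤ k),
          ((Finset.univ.filter (fun x : Fin n → X =>
            Real.exp (-(n * (condShannon (Pc k) + γ/2)))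
              ≤ ∏ t, pcond (Pc k) (x t) (y t))).card : ℝ)
            ≤ Real.exp (n * (Hi + γ/2)) := by
        intro k hk
        have hkle := (Finset.mem_filter.1 hk).2
        have hsumle : ∑ x : Fin n → X, ∏ t, pcond (Pc k) (x t) (y t) ≤ 1 := by
          rw [sum_prod_single (fun t v => pcond (Pc k) v (y t))]
          exact Finset.prod_le_one
            (fun t _ => Finset.sum_nonneg fun x' _ => pcond_nonneg hPc0 k _ _)
            (fun t _ => sum_pcond_le_one hPc0 k _)
        have hcount := card_ge_le Finset.univ (fun x : Fin n → X => ∏ t, pcond (Pc k) (x t) (y t))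
          (fun x _ => Finset.prod_nonneg fun t _ => pcond_nonneg hPc0 k _ _) hsumle
          (Real.exp_pos (-(n * (condShannon (Pc k) + γ/2))))
        refine le_trans hcount ?_
        rw [one_div, ← Real.exp_neg, neg_neg, Real.exp_le_exp]
        have hHk : condShannon (Pc k) ≤ Hi := by
          rcases eq_or_lt_of_le hkle with h | h
          · rw [← h]
          · exact (hdec i k h).le
        have := mul_le_mul_of_nonneg_left (add_le_add_right hHk (γ/2)) hnR.le
        linarith
      refine le_trans h3 (le_trans (Finset.sum_le_sum h4) ?_)
      rw [Finset.sum_const, nsmul_eq_mul, hM]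
      have hcard_le : ((Finset.univ.filter (fun k : Fin m => i ≤ k)).card : ℝ) ≤ (m:ℝ) := by
        have h5 := Finset.card_filter_le (Finset.univ : Finset (Fin m)) (fun k => i ≤ k)
        simp only [Finset.card_univ, Fintype.card_fin] at h5
        exact_mod_cast h5
      exact mul_le_mul_of_nonneg_right hcard_le (Real.exp_pos _).le
    have hpm := sum_rpow_le_card_rpow Sy (fun x => Pn x y) (fun x _ => hP0 x y) hα.1 hα.2
    have hstep1 : (∑ x, Q x y ^ α) ≤ (Sy.card:ℝ)^(1-α) * (∑ x, Q x y)^α := by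
      rw [hQα, ← hQsum]
      exact hpm
    have hstep2 : (∑ x, Q x y ^ α)^(1/α) ≤ ((Sy.card:ℝ)^(1-α) * (∑ x, Q x y)^α)^(1/α) :=
      Real.rpow_le_rpow (Finset.sum_nonneg fun x _ => Real.rpow_nonneg (hQP x y).1 α)
        hstep1 (one_div_pos.mpr hα.1).le
    have hstep3 : ((Sy.card:ℝ)^(1-α) * (∑ x, Q x y)^α)^(1/α)
        = ((Sy.card:ℝ)^(1-α))^(1/α) * ∑ x, Q x y := by
      rw [Real.mul_rpow (Real.rpow_nonneg (Nat.cast_nonneg _) _)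
        (Real.rpow_nonneg (hμy_nonneg y) _), rpow_rpow_inv (hμy_nonneg y) hα.1]
    have hstep4 : ((Sy.card:ℝ)^(1-α))^(1/α) ≤ M ^ ((1-α) * (1/α)) := by
      rw [← Real.rpow_mul (Nat.cast_nonneg _)]
      exact Real.rpow_le_rpow (Nat.cast_nonneg _) hcard hexp0
    calc (∑ x, Q x y ^ α)^(1/α)
        ≤ ((Sy.card:ℝ)^(1-α) * (∑ x, Q x y)^α)^(1/α) := hstep2
      _ = ((Sy.card:ℝ)^(1-α))^(1/α) * ∑ x, Q x y := hstep3
      _ ≤ M ^ ((1-α) * (1/α)) * ∑ x, Q x y :=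
          mul_le_mul_of_nonneg_right hstep4 (hμy_nonneg y)
  have hQtot : ∑ y : Fin n → Y, ∑ x : Fin n → X, Q x y ≤ 1 := by
    rw [Finset.sum_comm]
    calc ∑ x : Fin n → X, ∑ y : Fin n → Y, Q x y
        ≤ ∑ x : Fin n → X, ∑ y : Fin n → Y, Pn x y :=
          Finset.sum_le_sum fun x _ => Finset.sum_le_sum fun y _ => (hQP x y).2
      _ = 1 := hPtot
  have hTbound : T ≤ M ^ ((1-α) * (1/α)) := by
    rw [hT]
    calc ∑ y : Fin n → Y, (∑ x, Q x y ^ α)^(1/α)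
        ≤ ∑ y : Fin n → Y, M ^ ((1-α) * (1/α)) * ∑ x, Q x y :=
          Finset.sum_le_sum fun y _ => hybound y
      _ = M ^ ((1-α) * (1/α)) * ∑ y : Fin n → Y, ∑ x, Q x y := (Finset.mul_sum _ _ _).symm
      _ ≤ M ^ ((1-α) * (1/α)) * 1 :=
          mul_le_mul_of_nonneg_left hQtot (Real.rpow_nonneg hMpos.le _)
      _ = _ := mul_one _
  have hc0 : 0 ≤ α/(1-α) := div_nonneg hα.1.le (by linarith [hα.2])
  have hval : (α/(1-α)) * Real.log T ≤ n * (Hi + γ) := by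
    have hT0 : 0 ≤ T := Finset.sum_nonneg fun y _ => Real.rpow_nonneg
      (Finset.sum_nonneg fun x _ => Real.rpow_nonneg (hQP x y).1 α) _
    rcases eq_or_lt_of_le hT0 with hTzero | hTpos
    · rw [← hTzero, Real.log_zero, mul_zero]
      have hHi0 : 0 ≤ Hi := by
        rw [hHi]
        exact condShannon_nonneg _ (hPc0 i)
      have : (0:ℝ) ≤ Hi + γ := by linarith
      positivity
    · have hlog : Real.log T ≤ ((1-α) * (1/α)) * Real.log M := by
        calc Real.log T ≤ Real.log (M ^ ((1-α) * (1/α))) := Real.log_le_log hTpos hTbound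
          _ = ((1-α) * (1/α)) * Real.log M := Real.log_rpow hMpos _
      have h1α : (1:ℝ) - α ≠ 0 := by
        have := hα.2
        intro hz
        linarith
      calc (α/(1-α)) * Real.log T
          ≤ (α/(1-α)) * (((1-α) * (1/α)) * Real.log M) := mul_le_mul_of_nonneg_left hlog hc0
        _ = Real.log M := by
            have hαne : α ≠ 0 := hα.1.ne'
            field_simp
        _ = Real.log m + n * (Hi + γ/2) := by
            rw [hM, Real.log_mul (ne_of_gt hmR) (Real.exp_ne_zero _), Real.log_exp]
        _ ≤ n * (Hi + γ) := by nlinarith [h2]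
  have hmem : (α/(1-α)) * Real.log T ∈
      { h : ℝ | ∃ Q' : (Fin n → X) → (Fin n → Y) → ℝ,
        (∀ x y, 0 ≤ Q' x y ∧ Q' x y ≤ Pn x y) ∧
        (1 - ε' ≤ ∑ x, ∑ y, Q' x y) ∧
        h = (α / (1 - α)) * Real.log (∑ y, (∑ x, Q' x y ^ α) ^ (1 / α)) } :=
    ⟨Q, hQP, hmass, by rw [hT]⟩
  calc condSmoothRenyiF (Pmix m a Pc n) α ε'
      ≤ (α/(1-α)) * Real.log T := csInf_le (renyi_bddBelow Pn hα hε1) hmem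
    _ ≤ n * (Hi + γ) := hval

end Upper

section LowerPrep
variable {X Y : Type} [Fintype X] [Fintype Y]
variable {m : ℕ} {a : Fin m → ℝ} {Pc : Fin m → X → Y → ℝ}

lemma sum2_ite_compl {A B : Type} [Fintype A] [Fintype B] (w : A → B → ℝ)
    (P : A → B → Prop) [∀ a b, Decidable (P a b)] :
    ∑ a, ∑ b, (if P a b then w a b else 0) + ∑ a, ∑ b, (if ¬ P a b then w a b else 0)
      = ∑ a, ∑ b, w a b := by
  rw [← Finset.sum_add_distrib]
  refine Finset.sum_congr rfl fun x _ => ?_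
  rw [← Finset.sum_add_distrib]
  refine Finset.sum_congr rfl fun y _ => ?_
  by_cases h : P x y <;> simp [h]

lemma sum_filter_le_eq (a : Fin m → ℝ) (i : Fin m) :
    ∑ j ∈ Finset.univ.filter (fun k => k ≤ i), a j
      = ∑ j ∈ Finset.univ.filter (· < i), a j + a i := by
  have hset : Finset.univ.filter (fun k : Fin m => k ≤ i)
      = insert i (Finset.univ.filter (· < i)) := by
    ext k
    simp only [Finset.mem_filter, Finset.mem_univ, true_and, Finset.mem_insert]
    constructor
    · intro h
      rcases lt_or_eq_of_le h with h' | h'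
      · exact Or.inr h'
      · exact Or.inl h'
    · rintro (rfl | h)
      · exact le_refl _
      · exact h.le
  rw [hset, Finset.sum_insert (by simp)]
  ring

lemma sum_filter_gt (a : Fin m → ℝ) (hsum : ∑ i, a i = 1) (i : Fin m) :
    ∑ j ∈ Finset.univ.filter (fun k => i < k), a j
      = 1 - (∑ j ∈ Finset.univ.filter (· < i), a j + a i) := by
  have h := Finset.sum_filter_add_sum_filter_not Finset.univ (fun k => k ≤ i) a
  rw [hsum] at h
  have hcong : Finset.univ.filter (fun k : Fin m => ¬ k ≤ i)
      = Finset.univ.filter (fun k => i < k) :=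
    Finset.filter_congr fun k _ => by rw [not_le]
  rw [hcong, sum_filter_le_eq] at h
  linarith

end LowerPrep

section Lower
variable {X Y : Type} [Fintype X] [Fintype Y]
variable {m : ℕ} {a : Fin m → ℝ} {Pc : Fin m → X → Y → ℝ}

lemma lower_eventually (ha : ∀ i, 0 < a i) (hsum : ∑ i, a i = 1)
    (hPc0 : ∀ i x y, 0 ≤ Pc i x y) (hPc1 : ∀ i, ∑ x, ∑ y, Pc i x y = 1)
    (hdec : ∀ i j : Fin m, i < j → condShannon (Pc j) < condShannon (Pc i))
    {α : ℝ} (hα : α ∈ Set.Ioo (0:ℝ) 1) (i : Fin m) {ε' : ℝ} (hε0 : 0 ≤ ε')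
    (hhi : ε' < ∑ j ∈ Finset.univ.filter (· < i), a j + a i)
    {γ : ℝ} (hγ : 0 < γ) :
    ∀ᶠ n : ℕ in atTop,
      (n:ℝ) * (condShannon (Pc i) - γ) ≤ condSmoothRenyiF (Pmix m a Pc n) α ε' := by
  classical
  set Hi := condShannon (Pc i) with hHi
  set Ai1 := ∑ j ∈ Finset.univ.filter (· < i), a j + a i with hAi1
  set μ0 := (Ai1 - ε')/2 with hμ0
  have hμ0pos : 0 < μ0 := by rw [hμ0]; linarith
  set K := (1/(1-α)) * Real.log μ0 with hK
  set C2 : ℝ := (∑ k, a k * Vfun (Pc k)) / ((γ/4)^2) with hC2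
  have hα1 : (1:ℝ) - α ≠ 0 := by have := hα.2; intro hz; linarith
  have hαne : α ≠ 0 := hα.1.ne'
  have hE1 : ∀ᶠ n : ℕ in atTop, C2 / n + (Real.exp (-(γ/4)))^n ≤ μ0 := by
    have t1 : Tendsto (fun n : ℕ => C2 / n + (Real.exp (-(γ/4)))^n) atTop (nhds 0) := by
      have t2 := (tendsto_const_div_atTop_nhds_zero_nat C2).add
        (tendsto_pow_atTop_nhds_zero_of_lt_one (Real.exp_pos (-(γ/4))).le
          (by rw [Real.exp_lt_one_iff]; linarith))
      simpa using t2
    exact t1.eventually_le_const hμ0pos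
  have hE2 : ∀ᶠ n : ℕ in atTop, -K ≤ n * (γ/2) := by
    have h0 : Tendsto (fun n : ℕ => (n:ℝ) * (γ/2)) atTop atTop :=
      Tendsto.atTop_mul_const (half_pos hγ) tendsto_natCast_atTop_atTop
    exact h0.eventually_ge_atTop _
  filter_upwards [hE1, hE2, eventually_ge_atTop 1] with n h1 h2 hn1
  have hnpos : 0 < n := hn1
  have hnR : (0:ℝ) < n := by exact_mod_cast hnpos
  set Pn := Pmix m a Pc n with hPn
  have hP0 : ∀ x y, 0 ≤ Pn x y := fun x y => Pmix_nonneg hPc0 ha x y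
  have hPtot : ∑ x, ∑ y, Pn x y = 1 := Pmix_total ha hsum hPc1
  set PY : (Fin n → Y) → ℝ := fun y => ∑ x, Pn x y with hPY
  have hPY0 : ∀ y, 0 ≤ PY y := fun y => Finset.sum_nonneg fun x _ => hP0 x y
  have hPYtot : ∑ y, PY y = 1 := by
    rw [hPY, ← hPtot]
    exact Finset.sum_comm
  set c : ℝ := Hi - γ/2 with hc
  set θ : ℝ := Real.exp (-(n * c)) with hθ
  have hθpos : 0 < θ := Real.exp_pos _
  set Dp : (Fin n → X) → (Fin n → Y) → Prop := fun x y => Pn x y ≤ θ * PY y with hDp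
  -- counting the complement fibers
  have hcount : ∀ y : Fin n → Y,
      ((Finset.univ.filter (fun x : Fin n → X => ¬ Dp x y)).card : ℝ)
        ≤ Real.exp (n * c) := by
    intro y
    rcases (hPY0 y).lt_or_eq with hpos | hzero
    · have hsub : Finset.univ.filter (fun x : Fin n → X => ¬ Dp x y)
          ⊆ Finset.univ.filter (fun x : Fin n → X => θ ≤ Pn x y / PY y) := by
        intro x hx
        have hx' := (Finset.mem_filter.1 hx).2
        rw [hDp] at hx'
        dsimp only at hx'
        push_neg at hx'
        refine Finset.mem_filter.2 ⟨Finset.mem_univ x, ?_⟩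
        rw [le_div_iff₀ hpos]
        exact le_of_lt hx'
      have hsum1 : ∑ x : Fin n → X, Pn x y / PY y ≤ 1 := by
        rw [← Finset.sum_div, div_le_one hpos]
      have h1' := card_ge_le Finset.univ (fun x : Fin n → X => Pn x y / PY y)
        (fun x _ => div_nonneg (hP0 x y) (hPY0 y)) hsum1 hθpos
      refine le_trans ?_ (le_trans h1' ?_)
      · exact_mod_cast Nat.cast_le.2 (Finset.card_le_card hsub)
      · rw [hθ, one_div, ← Real.exp_neg, neg_neg]
    · have hall : ∀ x, Dp x y := by
        intro x
        have hx0 : Pn x y = 0 := le_antisymm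
          (le_trans (Finset.single_le_sum (fun x' _ => hP0 x' y) (Finset.mem_univ x)) hzero.ge)
          (hP0 x y)
        rw [hDp]
        dsimp only
        rw [hx0, ← hzero, mul_zero]
      have hempty : Finset.univ.filter (fun x : Fin n → X => ¬ Dp x y) = ∅ := by
        refine Finset.filter_eq_empty_iff.2 fun x _ => not_not_intro (hall x)
      rw [hempty]
      simp [Real.exp_pos]
      positivity
  -- the complement of D has small mixture mass
  have hDc : ∑ x : Fin n → X, ∑ y : Fin n → Y, (if ¬ Dp x y then Pn x y else 0)
      ≤ (1 - Ai1) + (C2/n + (Real.exp (-(γ/4)))^n) := by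
    have hEk1 : ∀ k, ∑ x : Fin n → X, ∑ y : Fin n → Y,
        (if ¬ Dp x y then ∏ t, Pc k (x t) (y t) else 0) ≤ 1 := by
      intro k
      calc ∑ x : Fin n → X, ∑ y : Fin n → Y, (if ¬ Dp x y then ∏ t, Pc k (x t) (y t) else 0)
          ≤ ∑ x : Fin n → X, ∑ y : Fin n → Y, ∏ t, Pc k (x t) (y t) := by
            refine Finset.sum_le_sum fun x _ => Finset.sum_le_sum fun y _ => ?_
            split
            · exact le_refl _
            · exact Finset.prod_nonneg fun t _ => hPc0 k _ _
        _ = 1 := total_mass_pow _ (hPc1 k)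
    have hEk2 : ∀ k, k ≤ i → ∑ x : Fin n → X, ∑ y : Fin n → Y,
        (if ¬ Dp x y then ∏ t, Pc k (x t) (y t) else 0)
          ≤ Vfun (Pc k)/(n*(γ/4)^2) + Real.exp (-(γ/4))^n := by
      intro k hk
      have hw0 : ∀ (x : Fin n → X) (y : Fin n → Y), 0 ≤ ∏ t, Pc k (x t) (y t) :=
        fun x y => Finset.prod_nonneg fun t _ => hPc0 k _ _
      set Uk : (Fin n → X) → (Fin n → Y) → Prop := fun x y =>
        (∏ t, pcond (Pc k) (x t) (y t)) ≤ Real.exp (-(n * (condShannon (Pc k) - γ/4)))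
        with hUk
      have hHk : Hi ≤ condShannon (Pc k) := by
        rcases eq_or_lt_of_le hk with h | h
        · rw [h]
        · exact (hdec k i h).le
      have hpart1 : ∑ x : Fin n → X, ∑ y : Fin n → Y,
          (if ¬ Uk x y then ∏ t, Pc k (x t) (y t) else 0)
            ≤ Vfun (Pc k)/(n*(γ/4)^2) := by
        have htyp := aep_typical (Pc k) (hPc0 k) (hPc1 k) (γ := γ/4) (by linarith) hnpos
        have hmono := sum2_ite_le (fun x y => ∏ t, Pc k (x t) (y t)) hw0
          (fun x y => Real.exp (-(n * (condShannon (Pc k) + γ/4)))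
              ≤ ∏ t, pcond (Pc k) (x t) (y t)
            ∧ (∏ t, pcond (Pc k) (x t) (y t))
              ≤ Real.exp (-(n * (condShannon (Pc k) - γ/4))))
          Uk (fun x y _ hA => hA.2)
        have hcompl := sum2_ite_compl (fun x y => ∏ t, Pc k (x t) (y t)) Uk
        rw [total_mass_pow _ (hPc1 k)] at hcompl
        have := le_trans htyp hmono
        linarith
      have hpart2 : ∑ x : Fin n → X, ∑ y : Fin n → Y,
          (if ¬ Dp x y ∧ Uk x y then ∏ t, Pc k (x t) (y t) else 0)
            ≤ Real.exp (-(γ/4))^n := by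
        rw [Finset.sum_comm]
        have hyb : ∀ y : Fin n → Y,
            ∑ x : Fin n → X, (if ¬ Dp x y ∧ Uk x y then ∏ t, Pc k (x t) (y t) else 0)
              ≤ Real.exp (-(n * (condShannon (Pc k) - γ/4))) * Real.exp (n*c)
                  * ∏ t, ∑ x', Pc k x' (y t) := by
          intro y
          set B := Real.exp (-(n * (condShannon (Pc k) - γ/4))) * ∏ t, ∑ x', Pc k x' (y t)
            with hB
          have hpY0 : 0 ≤ ∏ t, ∑ x', Pc k x' (y t) :=
            Finset.prod_nonneg fun t _ => Finset.sum_nonneg fun x' _ => hPc0 k _ _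
          have hB0 : 0 ≤ B := mul_nonneg (Real.exp_pos _).le hpY0
          have hpoint : ∀ x : Fin n → X,
              (if ¬ Dp x y ∧ Uk x y then ∏ t, Pc k (x t) (y t) else 0)
                ≤ (if ¬ Dp x y then B else 0) := by
            intro x
            by_cases hD : Dp x y
            · simp [hD]
            · by_cases hU : Uk x y
              · rw [if_pos ⟨hD, hU⟩, if_pos hD, hB]
                calc ∏ t, Pc k (x t) (y t)
                    = (∏ t, pcond (Pc k) (x t) (y t)) * ∏ t, ∑ x', Pc k x' (y t) := by
                      rw [← Finset.prod_mul_distrib]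
                      exact Finset.prod_congr rfl fun t _ => Pc_eq_pcond_mul hPc0 k _ _
                  _ ≤ Real.exp (-(n * (condShannon (Pc k) - γ/4)))
                        * ∏ t, ∑ x', Pc k x' (y t) :=
                      mul_le_mul_of_nonneg_right hU hpY0
              · rw [if_neg (fun hand => hU hand.2), if_pos hD]
                exact hB0
          calc ∑ x : Fin n → X, (if ¬ Dp x y ∧ Uk x y then ∏ t, Pc k (x t) (y t) else 0)
              ≤ ∑ x : Fin n → X, (if ¬ Dp x y then B else 0) :=
                Finset.sum_le_sum fun x _ => hpoint x
            _ = ((Finset.univ.filter (fun x : Fin n → X => ¬ Dp x y)).card : ℝ) * B := by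
                rw [Finset.sum_ite, Finset.sum_const, Finset.sum_const_zero, add_zero,
                  nsmul_eq_mul]
            _ ≤ Real.exp (n*c) * B := mul_le_mul_of_nonneg_right (hcount y) hB0
            _ = Real.exp (-(n * (condShannon (Pc k) - γ/4))) * Real.exp (n*c)
                  * ∏ t, ∑ x', Pc k x' (y t) := by rw [hB]; ring
        calc ∑ y : Fin n → Y, ∑ x : Fin n → X,
              (if ¬ Dp x y ∧ Uk x y then ∏ t, Pc k (x t) (y t) else 0)
            ≤ ∑ y : Fin n → Y, Real.exp (-(n * (condShannon (Pc k) - γ/4))) * Real.exp (n*c)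
                  * ∏ t, ∑ x', Pc k x' (y t) := Finset.sum_le_sum fun y _ => hyb y
          _ = Real.exp (-(n * (condShannon (Pc k) - γ/4))) * Real.exp (n*c)
                * ∑ y : Fin n → Y, ∏ t, ∑ x', Pc k x' (y t) := (Finset.mul_sum _ _ _).symm
          _ = Real.exp (-(n * (condShannon (Pc k) - γ/4))) * Real.exp (n*c) := by
              rw [sum_prod_single (fun t y' => ∑ x', Pc k x' y')]
              rw [Finset.prod_congr rfl fun t _ => pY_total hPc1 k]
              simp
          _ ≤ Real.exp (-(γ/4))^n := by
              rw [← Real.exp_add, ← Real.exp_nat_mul, Real.exp_le_exp]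
              have h3 := mul_le_mul_of_nonneg_left hHk hnR.le
              rw [hc]
              nlinarith
      calc ∑ x : Fin n → X, ∑ y : Fin n → Y,
            (if ¬ Dp x y then ∏ t, Pc k (x t) (y t) else 0)
          ≤ ∑ x : Fin n → X, ∑ y : Fin n → Y,
              ((if ¬ Dp x y ∧ Uk x y then ∏ t, Pc k (x t) (y t) else 0)
                + (if ¬ Uk x y then ∏ t, Pc k (x t) (y t) else 0)) := by
            refine Finset.sum_le_sum fun x _ => Finset.sum_le_sum fun y _ => ?_
            by_cases hD : Dp x y <;> by_cases hU : Uk x y <;>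
              simp [hD, hU, hw0 x y]
        _ = ∑ x : Fin n → X, ∑ y : Fin n → Y,
              (if ¬ Dp x y ∧ Uk x y then ∏ t, Pc k (x t) (y t) else 0)
            + ∑ x : Fin n → X, ∑ y : Fin n → Y,
              (if ¬ Uk x y then ∏ t, Pc k (x t) (y t) else 0) := by
            rw [← Finset.sum_add_distrib]
            exact Finset.sum_congr rfl fun x _ => Finset.sum_add_distrib
        _ ≤ Real.exp (-(γ/4))^n + Vfun (Pc k)/(n*(γ/4)^2) := add_le_add hpart2 hpart1
        _ = Vfun (Pc k)/(n*(γ/4)^2) + Real.exp (-(γ/4))^n := by ring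
    -- assemble over components
    simp only [hPn]
    rw [mixture_ite (fun x y => ¬ Dp x y)]
    have hsplitk := Finset.sum_filter_add_sum_filter_not Finset.univ (fun k : Fin m => k ≤ i)
      (fun k => a k * ∑ x : Fin n → X, ∑ y : Fin n → Y,
        (if ¬ Dp x y then ∏ t, Pc k (x t) (y t) else 0))
    rw [← hsplitk]
    have hbound1 : ∑ k ∈ Finset.univ.filter (fun k : Fin m => k ≤ i),
        a k * ∑ x : Fin n → X, ∑ y : Fin n → Y,
          (if ¬ Dp x y then ∏ t, Pc k (x t) (y t) else 0)
        ≤ C2/n + Real.exp (-(γ/4))^n := by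
      have hterm : ∀ k ∈ Finset.univ.filter (fun k : Fin m => k ≤ i),
          a k * ∑ x : Fin n → X, ∑ y : Fin n → Y,
            (if ¬ Dp x y then ∏ t, Pc k (x t) (y t) else 0)
          ≤ a k * Vfun (Pc k)/(n*(γ/4)^2) + a k * Real.exp (-(γ/4))^n := by
        intro k hk
        have h4 := mul_le_mul_of_nonneg_left (hEk2 k (Finset.mem_filter.1 hk).2) (ha k).le
        calc a k * ∑ x : Fin n → X, ∑ y : Fin n → Y,
              (if ¬ Dp x y then ∏ t, Pc k (x t) (y t) else 0)
            ≤ a k * (Vfun (Pc k)/(n*(γ/4)^2) + Real.exp (-(γ/4))^n) := h4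
          _ = a k * Vfun (Pc k)/(n*(γ/4)^2) + a k * Real.exp (-(γ/4))^n := by ring
      refine le_trans (Finset.sum_le_sum hterm) ?_
      rw [Finset.sum_add_distrib]
      have hb1 : ∑ k ∈ Finset.univ.filter (fun k : Fin m => k ≤ i),
          a k * Vfun (Pc k)/(n*(γ/4)^2) ≤ C2/n := by
        have hnum : ∑ k ∈ Finset.univ.filter (fun k : Fin m => k ≤ i), a k * Vfun (Pc k)
            ≤ ∑ k, a k * Vfun (Pc k) :=
          Finset.sum_le_sum_of_subset_of_nonneg (Finset.filter_subset _ _)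
            (fun k _ _ => mul_nonneg (ha k).le (Vfun_nonneg _ (hPc0 k)))
        have hd : (0:ℝ) < (n:ℝ) * (γ/4)^2 := by positivity
        calc ∑ k ∈ Finset.univ.filter (fun k : Fin m => k ≤ i),
            a k * Vfun (Pc k)/(n*(γ/4)^2)
            = (∑ k ∈ Finset.univ.filter (fun k : Fin m => k ≤ i),
                a k * Vfun (Pc k))/(n*(γ/4)^2) := (Finset.sum_div _ _ _).symm
          _ ≤ (∑ k, a k * Vfun (Pc k))/(n*(γ/4)^2) := (div_le_div_iff_of_pos_right hd).2 hnum
          _ = C2/n := by rw [hC2, div_div, mul_comm]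
      have hb2 : ∑ k ∈ Finset.univ.filter (fun k : Fin m => k ≤ i),
          a k * Real.exp (-(γ/4))^n ≤ Real.exp (-(γ/4))^n := by
        rw [← Finset.sum_mul]
        have hak : ∑ k ∈ Finset.univ.filter (fun k : Fin m => k ≤ i), a k ≤ 1 := by
          rw [← hsum]
          exact Finset.sum_le_sum_of_subset_of_nonneg (Finset.filter_subset _ _)
            (fun k _ _ => (ha k).le)
        calc (∑ k ∈ Finset.univ.filter (fun k : Fin m => k ≤ i), a k)
              * Real.exp (-(γ/4))^n
            ≤ 1 * Real.exp (-(γ/4))^n :=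
              mul_le_mul_of_nonneg_right hak (by positivity)
          _ = _ := one_mul _
      linarith
    have hbound2 : ∑ k ∈ Finset.univ.filter (fun k : Fin m => ¬ k ≤ i),
        a k * ∑ x : Fin n → X, ∑ y : Fin n → Y,
          (if ¬ Dp x y then ∏ t, Pc k (x t) (y t) else 0)
        ≤ 1 - Ai1 := by
      have hterm : ∀ k ∈ Finset.univ.filter (fun k : Fin m => ¬ k ≤ i),
          a k * ∑ x : Fin n → X, ∑ y : Fin n → Y,
            (if ¬ Dp x y then ∏ t, Pc k (x t) (y t) else 0) ≤ a k := by
        intro k hk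
        have h5 := mul_le_mul_of_nonneg_left (hEk1 k) (ha k).le
        rwa [mul_one] at h5
      refine le_trans (Finset.sum_le_sum hterm) ?_
      have hcong : Finset.univ.filter (fun k : Fin m => ¬ k ≤ i)
          = Finset.univ.filter (fun k => i < k) :=
        Finset.filter_congr fun k _ => by rw [not_le]
      rw [hcong, sum_filter_gt a hsum i, hAi1]
    linarith
  -- mass of D itself
  have hD_mass : ε' + μ0 ≤ ∑ x : Fin n → X, ∑ y : Fin n → Y,
      (if Dp x y then Pn x y else 0) := by
    have hcompl := sum2_ite_compl Pn Dp
    rw [hPtot] at hcompl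
    have hAμ : Ai1 - μ0 = ε' + μ0 := by rw [hμ0]; ring
    linarith
  -- now lower bound every member of the smoothing set
  set e : ℝ := (α - 1) * (1/α) with he
  have hee : e = 1 - 1/α := by rw [he]; field_simp
  have hlb : ∀ h ∈ { h : ℝ | ∃ Q : (Fin n → X) → (Fin n → Y) → ℝ,
      (∀ x y, 0 ≤ Q x y ∧ Q x y ≤ Pn x y) ∧
      (1 - ε' ≤ ∑ x, ∑ y, Q x y) ∧
      h = (α / (1 - α)) * Real.log (∑ y, (∑ x, Q x y ^ α) ^ (1 / α)) },
      (n:ℝ) * c + K ≤ h := by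
    rintro h ⟨Q, hQ, hmassQ, rfl⟩
    set μy : (Fin n → Y) → ℝ := fun y => ∑ x, if Dp x y then Q x y else 0 with hμy
    have hμy0 : ∀ y, 0 ≤ μy y := by
      intro y
      refine Finset.sum_nonneg fun x _ => ?_
      split
      · exact (hQ x y).1
      · exact le_refl 0
    have hμyle : ∀ y, μy y ≤ PY y := by
      intro y
      refine Finset.sum_le_sum fun x _ => ?_
      split
      · exact (hQ x y).2
      · exact hP0 x y
    have hμsum : μ0 ≤ ∑ y, μy y := by
      have hswap : ∑ y, μy y
          = ∑ x : Fin n → X, ∑ y : Fin n → Y, (if Dp x y then Q x y else 0) :=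
        Finset.sum_comm
      have hcomplQ := sum2_ite_compl Q Dp
      have hQle : ∑ x : Fin n → X, ∑ y : Fin n → Y, (if ¬ Dp x y then Q x y else 0)
          ≤ ∑ x : Fin n → X, ∑ y : Fin n → Y, (if ¬ Dp x y then Pn x y else 0) := by
        refine Finset.sum_le_sum fun x _ => Finset.sum_le_sum fun y _ => ?_
        split
        · exact (hQ x y).2
        · exact le_refl 0
      have hcomplP := sum2_ite_compl Pn Dp
      rw [hPtot] at hcomplP
      rw [hswap]
      linarith
    -- pointwise lower bound per y
    have hyb : ∀ y : Fin n → Y,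
        θ^e * (PY y ^ (1 - 1/α) * μy y ^ (1/α)) ≤ (∑ x, Q x y ^ α)^(1/α) := by
      intro y
      have hb2 : ∀ x : Fin n → X,
          (if Dp x y then Q x y else 0) * (θ * PY y)^(α-1) ≤ Q x y ^ α := by
        intro x
        by_cases hD : Dp x y
        · rw [if_pos hD]
          rcases (hQ x y).1.lt_or_eq with hQpos | hQzero
          · have hQle' : Q x y ≤ θ * PY y := le_trans (hQ x y).2 hD
            have hr := Real.rpow_le_rpow_of_nonpos hQpos hQle' (by linarith [hα.2] : α - 1 ≤ 0)
            calc Q x y * (θ * PY y)^(α-1) ≤ Q x y * Q x y ^ (α-1) :=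
                mul_le_mul_of_nonneg_left hr hQpos.le
              _ = Q x y ^ α := by
                  nth_rewrite 1 [← Real.rpow_one (Q x y)]
                  rw [← Real.rpow_add hQpos]
                  norm_num
          · rw [← hQzero, zero_mul]
            exact Real.rpow_nonneg le_rfl α
        · rw [if_neg hD, zero_mul]
          exact Real.rpow_nonneg (hQ x y).1 α
      have hsum2 : μy y * (θ * PY y)^(α-1) ≤ ∑ x, Q x y ^ α := by
        rw [hμy]
        dsimp only
        rw [Finset.sum_mul]
        exact Finset.sum_le_sum fun x _ => hb2 x
      have hbase0 : 0 ≤ μy y * (θ * PY y)^(α-1) :=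
        mul_nonneg (hμy0 y) (Real.rpow_nonneg (mul_nonneg hθpos.le (hPY0 y)) _)
      have hr2 : (μy y * (θ * PY y)^(α-1))^(1/α) ≤ (∑ x, Q x y ^ α)^(1/α) :=
        Real.rpow_le_rpow hbase0 hsum2 (one_div_pos.mpr hα.1).le
      have hr3 : (μy y * (θ * PY y)^(α-1))^(1/α)
          = θ^e * (PY y ^ e * μy y ^ (1/α)) := by
        rw [Real.mul_rpow (hμy0 y) (Real.rpow_nonneg (mul_nonneg hθpos.le (hPY0 y)) _),
          ← Real.rpow_mul (mul_nonneg hθpos.le (hPY0 y)), ← he,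
          Real.mul_rpow hθpos.le (hPY0 y)]
        ring
      rw [← hee] at *
      calc θ^e * (PY y ^ e * μy y ^ (1/α)) = (μy y * (θ * PY y)^(α-1))^(1/α) := hr3.symm
        _ ≤ _ := hr2
    have hT : θ^e * μ0^(1/α) ≤ ∑ y, (∑ x, Q x y ^ α)^(1/α) := by
      have hθe : 0 ≤ θ^e := Real.rpow_nonneg hθpos.le _
      calc θ^e * μ0^(1/α)
          ≤ θ^e * (∑ y, μy y)^(1/α) := by
            refine mul_le_mul_of_nonneg_left ?_ hθe
            exact Real.rpow_le_rpow hμ0pos.le hμsum (one_div_pos.mpr hα.1).le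
        _ ≤ θ^e * ∑ y, PY y ^ (1 - 1/α) * μy y ^ (1/α) := by
            refine mul_le_mul_of_nonneg_left ?_ hθe
            exact rpow_sum_le_weighted PY μy hPY0 hPYtot hμy0 hμyle hα.1 hα.2
        _ = ∑ y, θ^e * (PY y ^ (1 - 1/α) * μy y ^ (1/α)) := Finset.mul_sum _ _ _
        _ ≤ ∑ y, (∑ x, Q x y ^ α)^(1/α) := Finset.sum_le_sum fun y _ => hyb y
    have hτpos : 0 < θ^e * μ0^(1/α) :=
      mul_pos (Real.rpow_pos_of_pos hθpos _) (Real.rpow_pos_of_pos hμ0pos _)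
    have hc0 : 0 ≤ α/(1-α) := div_nonneg hα.1.le (by linarith [hα.2])
    have hlogτ : Real.log (θ^e * μ0^(1/α)) = e * (-(n*c)) + (1/α) * Real.log μ0 := by
      rw [Real.log_mul (Real.rpow_pos_of_pos hθpos _).ne' (Real.rpow_pos_of_pos hμ0pos _).ne',
        Real.log_rpow hθpos, Real.log_rpow hμ0pos, hθ, Real.log_exp]
    have hid : (α/(1-α)) * (e * (-(n*c)) + (1/α) * Real.log μ0)
        = n * c + K := by
      rw [he, hK]
      field_simp
      ring
    calc (n:ℝ) * c + K
        = (α/(1-α)) * Real.log (θ^e * μ0^(1/α)) := by rw [hlogτ, hid]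
      _ ≤ (α/(1-α)) * Real.log (∑ y, (∑ x, Q x y ^ α)^(1/α)) :=
          mul_le_mul_of_nonneg_left (Real.log_le_log hτpos hT) hc0
  have hne : Set.Nonempty { h : ℝ | ∃ Q : (Fin n → X) → (Fin n → Y) → ℝ,
      (∀ x y, 0 ≤ Q x y ∧ Q x y ≤ Pn x y) ∧
      (1 - ε' ≤ ∑ x, ∑ y, Q x y) ∧
      h = (α / (1 - α)) * Real.log (∑ y, (∑ x, Q x y ^ α) ^ (1 / α)) } :=
    renyi_nonempty Pn hP0 (by rw [hPtot]; linarith)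
  have hfin := le_csInf hne hlb
  have hKge : (n:ℝ) * (Hi - γ) ≤ n * c + K := by
    rw [hc]
    have hr : (n:ℝ) * (Hi - γ) = n * (Hi - γ/2) - n * (γ/2) := by ring
    linarith [h2]
  exact le_trans hKge hfin

end Lower

section Final
variable {X Y : Type} [Fintype X] [Fintype Y]
variable {m : ℕ} {a : Fin m → ℝ} {Pc : Fin m → X → Y → ℝ}

lemma key_tendsto (ha : ∀ i, 0 < a i) (hsum : ∑ i, a i = 1)
    (hPc0 : ∀ i x y, 0 ≤ Pc i x y) (hPc1 : ∀ i, ∑ x, ∑ y, Pc i x y = 1)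
    (hdec : ∀ i j : Fin m, i < j → condShannon (Pc j) < condShannon (Pc i))
    {α : ℝ} (hα : α ∈ Set.Ioo (0:ℝ) 1) (i : Fin m) {ε' : ℝ}
    (hlo : ∑ j ∈ Finset.univ.filter (· < i), a j < ε')
    (hhi : ε' < ∑ j ∈ Finset.univ.filter (· < i), a j + a i) :
    Tendsto (fun n : ℕ => (1/(n:ℝ)) * condSmoothRenyiF (Pmix m a Pc n) α ε') atTop
      (nhds (condShannon (Pc i))) := by
  have hA0 : 0 ≤ ∑ j ∈ Finset.univ.filter (· < i), a j :=
    Finset.sum_nonneg fun j _ => (ha j).le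
  have hε0 : 0 ≤ ε' := le_of_lt (lt_of_le_of_lt hA0 hlo)
  have hε1 : ε' < 1 := by
    have h6 : ∑ j ∈ Finset.univ.filter (· < i), a j + a i ≤ 1 := by
      rw [← sum_filter_le_eq a i, ← hsum]
      exact Finset.sum_le_sum_of_subset_of_nonneg (Finset.filter_subset _ _)
        (fun k _ _ => (ha k).le)
    linarith
  rw [Metric.tendsto_nhds]
  intro δ hδ
  have hup := upper_eventually ha hsum hPc0 hPc1 hdec hα i hlo hε1 (half_pos hδ)
  have hlow := lower_eventually ha hsum hPc0 hPc1 hdec hα i hε0 hhi (half_pos hδ)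
  filter_upwards [hup, hlow, eventually_ge_atTop 1] with n hu hl hn1
  have hnR : (0:ℝ) < n := by exact_mod_cast (hn1 : 1 ≤ n)
  have hnne : (n:ℝ) ≠ 0 := hnR.ne'
  set S := condSmoothRenyiF (Pmix m a Pc n) α ε' with hS
  set H := condShannon (Pc i) with hH
  have hub : (1/(n:ℝ)) * S ≤ H + δ/2 := by
    have := mul_le_mul_of_nonneg_left hu (le_of_lt (one_div_pos.mpr hnR))
    calc (1/(n:ℝ)) * S ≤ (1/(n:ℝ)) * ((n:ℝ) * (H + δ/2)) := this
      _ = H + δ/2 := by field_simp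
  have hlb : H - δ/2 ≤ (1/(n:ℝ)) * S := by
    have := mul_le_mul_of_nonneg_left hl (le_of_lt (one_div_pos.mpr hnR))
    calc H - δ/2 = (1/(n:ℝ)) * ((n:ℝ) * (H - δ/2)) := by field_simp
      _ ≤ (1/(n:ℝ)) * S := this
  rw [Real.dist_eq, abs_lt]
  constructor <;> linarith

end Final

/-- Theorem 2: for a mixture of `m` i.i.d. sources with strictly decreasing
conditional entropies and `ε ∈ [A_i, A_{i+1})`, the asymptotic conditional
ε-smooth Rényi entropy rate equals `H(X_i|Y_i)`. -/
theorem mixture_smooth_renyi {X Y : Type} [Fintype X] [Fintype Y]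
    (m : ℕ) (hm : 0 < m) (a : Fin m → ℝ) (ha : ∀ i, 0 < a i) (hsum : ∑ i, a i = 1)
    (Pc : Fin m → X → Y → ℝ) (hPc0 : ∀ i x y, 0 ≤ Pc i x y)
    (hPc1 : ∀ i, ∑ x, ∑ y, Pc i x y = 1)
    (hdec : ∀ i j : Fin m, i < j → condShannon (Pc j) < condShannon (Pc i))
    (α : ℝ) (hα : α ∈ Set.Ioo (0:ℝ) 1) (i : Fin m) (ε : ℝ)
    (hεlo : ∑ j ∈ Finset.univ.filter (· < i), a j ≤ ε)
    (hεhi : ε < ∑ j ∈ Finset.univ.filter (· < i), a j + a i) :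
    Tendsto (fun δ : ℝ =>
        limsup (fun n : ℕ => (1 / (n : ℝ)) *
          condSmoothRenyiF
            (fun (x : Fin n → X) (y : Fin n → Y) =>
              ∑ k, a k * ∏ t, Pc k (x t) (y t)) α (ε + δ)) atTop)
      (nhdsWithin 0 (Set.Ioi 0)) (nhds (condShannon (Pc i))) := by
  classical
  have hkey : ∀ δ : ℝ, δ ∈ Set.Ioo 0 (∑ j ∈ Finset.univ.filter (· < i), a j + a i - ε) →
      limsup (fun n : ℕ => (1/(n:ℝ)) * condSmoothRenyiF (Pmix m a Pc n) α (ε + δ)) atTop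
        = condShannon (Pc i) := by
    intro δ hδ
    have hlo : ∑ j ∈ Finset.univ.filter (· < i), a j < ε + δ := by
      have := hδ.1
      linarith
    have hhi : ε + δ < ∑ j ∈ Finset.univ.filter (· < i), a j + a i := by
      have := hδ.2
      linarith
    exact (key_tendsto ha hsum hPc0 hPc1 hdec hα i hlo hhi).limsup_eq
  have hmemnhds : Set.Ioo 0 (∑ j ∈ Finset.univ.filter (· < i), a j + a i - ε)
      ∈ nhdsWithin (0:ℝ) (Set.Ioi 0) :=
    Ioo_mem_nhdsGT_of_mem ⟨le_refl 0, by linarith⟩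
  refine Tendsto.congr' ?_ (tendsto_const_nhds :
    Tendsto (fun _ : ℝ => condShannon (Pc i)) (nhdsWithin (0:ℝ) (Set.Ioi 0))
      (nhds (condShannon (Pc i))))
  exact Filter.eventuallyEq_of_mem hmemnhds fun δ hδ => (hkey δ hδ).symm
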